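/- Let f be a function on a complete lattice that preserves all suprema (continuous), and let g, h be monotone functions. If f∘g ≤ h∘f pointwise, then f∘g* ≤ h*∘f, where k* denotes the least closure above k. -/
import Mathlib

def IsClosure {L : Type*} [CompleteLattice L] (c : L → L) : Prop :=
  Monotone c ∧ (∀ x, x ≤ c x) ∧ (∀ x, c (c x) ≤ c x)

def IsLeastClosureAbove {L : Type*} [CompleteLattice L] (k c : L → L) : Prop :=
  IsClosure c ∧ (∀ x, k x ≤ c x) ∧
    ∀ d, IsClosure d → (∀ x, k x ≤ d x) → ∀ x, c x ≤ d x

/-- If f is continuous and f∘g ≤ h∘f, then f∘g* ≤ h*∘f. -/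
theorem stmt2 {L : Type*} [CompleteLattice L] (f g h gs hs : L → L)
    (hfcont : ∀ S : Set L, f (sSup S) = ⨆ x ∈ S, f x)
    (hg : Monotone g) (hh : Monotone h)
    (hgs : IsLeastClosureAbove g gs) (hhs : IsLeastClosureAbove h hs)
    (hyp : ∀ x, f (g x) ≤ h (f x)) :
    ∀ x, f (gs x) ≤ hs (f x) := by
  obtain ⟨⟨hgsmono, hgsle, hgsid⟩, hggs, hgsmin⟩ := hgs
  obtain ⟨⟨hhsmono, hhsle, hhsid⟩, hhhs, _⟩ := hhs
  have hfmono : Monotone f := by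
    intro a b hab
    have hsup : sSup ({a, b} : Set L) = b := by
      rw [sSup_pair, sup_eq_right.mpr hab]
    have : f b = f a ⊔ f b := by
      calc f b = f (sSup ({a, b} : Set L)) := by rw [hsup]
        _ = ⨆ x ∈ ({a, b} : Set L), f x := hfcont _
        _ = f a ⊔ f b := iSup_pair
    exact le_sup_left.trans this.ge
  set d : L → L := fun x => sSup {y | f y ≤ hs (f x)} with hd
  have hfd : ∀ x, f (d x) ≤ hs (f x) := by
    intro x
    rw [hd]
    simp only []
    rw [hfcont]
    exact iSup₂_le fun y hy => hy
  have hdmono : Monotone d := by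
    intro a b hab
    apply sSup_le_sSup
    intro y hy
    exact le_trans hy (hhsmono (hfmono hab))
  have hdle : ∀ x, x ≤ d x := fun x => le_sSup (hhsle (f x))
  have hdid : ∀ x, d (d x) ≤ d x := by
    intro x
    apply sSup_le
    intro y hy
    apply le_sSup
    calc f y ≤ hs (f (d x)) := hy
      _ ≤ hs (hs (f x)) := hhsmono (hfd x)
      _ ≤ hs (f x) := hhsid _
  have hgd : ∀ x, g x ≤ d x := by
    intro x
    exact le_sSup ((hyp x).trans (hhhs (f x)))
  intro x
  have := hgsmin d ⟨hdmono, hdle, hdid⟩ hgd x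
  exact (hfmono this).trans (hfd x)
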